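/- arXiv:1908.01571 — 2 statements merged into one kernel-verified Lean document; each statement's English description precedes it below -/
import Mathlib

section
/- For every complex z, 1/Γ(z) = z·e^(γz)·∏_{n=1}^{∞} (1 + z/n)·e^(−z/n), where γ is the Euler–Mascheroni constant. -/
open Filter Complex Real

theorem weierstrass_product_one_div_Gamma (z : ℂ) :
    Tendsto (fun n : ℕ =>
        z * Complex.exp ((Real.eulerMascheroniConstant : ℂ) * z) *
          ∏ k ∈ Finset.range n,
            (1 + z / ((k : ℂ) + 1)) * Complex.exp (-z / ((k : ℂ) + 1)))
      atTop (nhds (Complex.Gamma z)⁻¹) := by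
  by_cases hz : ∃ m : ℕ, z = -m
  · -- z is a nonpositive integer: both sides are eventually/exactly zero
    obtain ⟨m, rfl⟩ := hz
    rw [Complex.Gamma_neg_nat_eq_zero, inv_zero]
    apply Tendsto.congr' _ (tendsto_const_nhds (x := (0 : ℂ)))
    filter_upwards [eventually_ge_atTop (m + 1)] with n hn
    rcases Nat.eq_zero_or_pos m with rfl | hm
    · simp
    · symm
      apply mul_eq_zero_of_right
      apply Finset.prod_eq_zero (Finset.mem_range.2 (by omega) : m - 1 ∈ Finset.range n)
      apply mul_eq_zero_of_left
      have h1 : ((m - 1 : ℕ) : ℂ) + 1 = (m : ℂ) := by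
        push_cast [Nat.cast_sub hm]; ring
      have hm' : (m : ℂ) ≠ 0 := Nat.cast_ne_zero.2 hm.ne'
      rw [h1, neg_div, div_self hm']
      ring
  · push_neg at hz
    have hz0 : z ≠ 0 := by simpa using hz 0
    have hΓ : Complex.Gamma z ≠ 0 := Complex.Gamma_ne_zero hz
    have h1 : Tendsto (fun n : ℕ => (Complex.GammaSeq z n)⁻¹ *
        Complex.exp (z * ((Real.eulerMascheroniConstant : ℂ) -
          (((harmonic n : ℝ) : ℂ) - (Real.log n : ℂ))))) atTop
        (nhds ((Complex.Gamma z)⁻¹ * 1)) := by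
      refine Tendsto.mul ((Complex.GammaSeq_tendsto_Gamma z).inv₀ hΓ) ?_
      have h2 : Tendsto (fun n : ℕ => z * ((Real.eulerMascheroniConstant : ℂ) -
          (((harmonic n : ℝ) : ℂ) - (Real.log n : ℂ)))) atTop (nhds 0) := by
        have h3 : Tendsto (fun n : ℕ => (((harmonic n : ℝ) - Real.log n : ℝ) : ℂ)) atTop
            (nhds ((Real.eulerMascheroniConstant : ℂ))) :=
          (Complex.continuous_ofReal.tendsto _).comp Real.tendsto_harmonic_sub_log
        have := (tendsto_const_nhds (x := (Real.eulerMascheroniConstant : ℂ))).sub h3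
        rw [sub_self] at this
        have := (tendsto_const_nhds (x := z)).mul this
        rw [mul_zero] at this
        convert this using 2 with n
        push_cast
        ring
      simpa [Function.comp_def] using (Complex.continuous_exp.tendsto 0).comp h2
    rw [mul_one] at h1
    apply h1.congr'
    filter_upwards [eventually_ge_atTop 1] with n hn
    have hn0 : (n : ℂ) ≠ 0 := Nat.cast_ne_zero.2 (by omega)
    -- abbreviations
    set γc : ℂ := (Real.eulerMascheroniConstant : ℂ)
    set Hc : ℂ := ((harmonic n : ℝ) : ℂ)
    set Lc : ℂ := ((Real.log n : ℝ) : ℂ)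
    have hpow : (n : ℂ) ^ z = Complex.exp (z * Lc) := by
      rw [Complex.cpow_def_of_ne_zero hn0]
      congr 1
      rw [← Complex.natCast_log]
      ring
    have hinv : (Complex.GammaSeq z n)⁻¹ =
        (∏ j ∈ Finset.range (n + 1), (z + j)) / ((n : ℂ) ^ z * (n.factorial : ℂ)) := by
      rw [Complex.GammaSeq, inv_div]
    have hfac : (∏ k ∈ Finset.range n, ((k : ℂ) + 1)) = (n.factorial : ℂ) := by
      rw [← Finset.prod_range_add_one_eq_factorial n]
      push_cast
      rfl
    have hprodz : (∏ j ∈ Finset.range (n + 1), (z + j)) =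
        z * ∏ k ∈ Finset.range n, (z + ((k : ℂ) + 1)) := by
      rw [Finset.prod_range_succ']
      push_cast
      ring
    have hHc : Hc = ∑ k ∈ Finset.range n, ((k : ℂ) + 1)⁻¹ := by
      show ((harmonic n : ℝ) : ℂ) = _
      rw [harmonic]
      push_cast
      ring
    have hsplit : (∏ k ∈ Finset.range n, ((1 + z / ((k : ℂ) + 1)) *
        Complex.exp (-z / ((k : ℂ) + 1)))) =
        (∏ k ∈ Finset.range n, (1 + z / ((k : ℂ) + 1))) * Complex.exp (-(z * Hc)) := by
      rw [Finset.prod_mul_distrib, ← Complex.exp_sum]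
      rw [hHc, Finset.mul_sum, ← Finset.sum_neg_distrib]
      congr 2
      apply Finset.sum_congr rfl
      intro k _
      rw [div_eq_mul_inv]
      ring
    have hterm : ∀ k ∈ Finset.range n, (1 + z / ((k : ℂ) + 1)) =
        (z + ((k : ℂ) + 1)) / ((k : ℂ) + 1) := by
      intro k _
      have h0 : ((k : ℂ) + 1) ≠ 0 := by
        exact_mod_cast Nat.succ_ne_zero k
      field_simp
      ring
    have hprod : (∏ k ∈ Finset.range n, (1 + z / ((k : ℂ) + 1))) =
        (∏ k ∈ Finset.range n, (z + ((k : ℂ) + 1))) / (n.factorial : ℂ) := by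
      rw [Finset.prod_congr rfl hterm, Finset.prod_div_distrib, hfac]
    have hE : Complex.exp (z * Lc) ≠ 0 := Complex.exp_ne_zero _
    have hF : (n.factorial : ℂ) ≠ 0 := Nat.cast_ne_zero.2 n.factorial_ne_zero
    have hexp : Complex.exp (z * (γc - (Hc - Lc))) =
        Complex.exp (γc * z) * Complex.exp (-(z * Hc)) * Complex.exp (z * Lc) := by
      rw [← Complex.exp_add, ← Complex.exp_add]
      congr 1
      ring
    rw [hinv, hpow, hprodz, hsplit, hprod]
    field_simp
    rw [hexp]
    ring
end

section
/- For every natural number n ≥ 2, ∏_{i=1}^{n−1} Γ(i/n) = √((2π)^(n−1) / n). -/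
open Real

-- |1 - exp(θ i)| = 2 sin(θ/2) for θ ∈ [0, 2π]
lemma abs_one_sub_exp (θ : ℝ) (h0 : 0 ≤ θ) (h2 : θ ≤ 2 * π) :
    ‖1 - Complex.exp (θ * Complex.I)‖ = 2 * Real.sin (θ / 2) := by
  have h1 : Complex.exp ((θ / 2 : ℝ) * Complex.I) * Complex.exp ((θ / 2 : ℝ) * Complex.I)
      = Complex.exp ((θ : ℝ) * Complex.I) := by
    rw [← Complex.exp_add]; congr 1; push_cast; ring
  have hm : Complex.exp ((θ / 2 : ℝ) * Complex.I) *
      Complex.exp (-((θ / 2 : ℝ) : ℂ) * Complex.I) = 1 := by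
    rw [← Complex.exp_add, show ((θ / 2 : ℝ) : ℂ) * Complex.I +
      -((θ / 2 : ℝ) : ℂ) * Complex.I = 0 by ring, Complex.exp_zero]
  have key : (1 : ℂ) - Complex.exp (θ * Complex.I) =
      Complex.exp ((θ / 2 : ℝ) * Complex.I) *
        (-2 * Complex.I * Complex.sin ((θ / 2 : ℝ))) := by
    rw [Complex.sin]
    linear_combination h1 - hm + (Complex.exp ((θ / 2 : ℝ) * Complex.I) *
      Complex.exp (-((θ / 2 : ℝ) : ℂ) * Complex.I) -
        Complex.exp ((θ / 2 : ℝ) * Complex.I) *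
          Complex.exp ((θ / 2 : ℝ) * Complex.I)) * Complex.I_sq
  rw [key, norm_mul, Complex.norm_exp_ofReal_mul_I, one_mul, ← Complex.ofReal_sin]
  rw [norm_mul, norm_mul, Complex.norm_real, Real.norm_eq_abs, Complex.norm_I]
  rw [abs_of_nonneg (Real.sin_nonneg_of_nonneg_of_le_pi (by linarith) (by linarith))]
  norm_num

lemma prod_sin_pi_div (n : ℕ) (hn : 2 ≤ n) :
    (∏ i ∈ Finset.Icc 1 (n - 1), Real.sin (π * i / n)) = n / 2 ^ (n - 1) := by
  obtain ⟨m, rfl⟩ : ∃ m, n = m + 1 := ⟨n - 1, by omega⟩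
  have hμ := Complex.isPrimitiveRoot_exp (m + 1) (by omega)
  have h := hμ.prod_one_sub_pow_eq_order
  have habs := congrArg norm h
  rw [norm_prod] at habs
  push_cast at habs
  have hm0 : ((m : ℂ) + 1) ≠ 0 := Nat.cast_add_one_ne_zero m
  have hcalc : ∀ k ∈ Finset.range m,
      ‖1 - Complex.exp (2 * ↑π * Complex.I / (↑m + 1)) ^ (k + 1)‖ =
        2 * Real.sin (π * (k + 1) / (m + 1)) := by
    intro k hk
    rw [← Complex.exp_nat_mul]
    have hθ : ((k + 1 : ℕ) : ℂ) * (2 * ↑π * Complex.I / ((m : ℂ) + 1)) =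
        ((2 * π * (k + 1) / (m + 1) : ℝ) : ℂ) * Complex.I := by
      push_cast
      field_simp
    rw [hθ, abs_one_sub_exp]
    · congr 1
      congr 1
      ring
    · positivity
    · rw [div_le_iff₀ (by positivity)]
      have hk' : (k : ℝ) + 1 ≤ m := by
        have := Finset.mem_range.mp hk
        exact_mod_cast Nat.succ_le_of_lt this
      nlinarith [Real.pi_pos]
  rw [Finset.prod_congr rfl hcalc] at habs
  have habs' : ‖((m : ℂ) + 1)‖ = (m : ℝ) + 1 := by
    rw [show ((m : ℂ) + 1) = ((m + 1 : ℝ) : ℂ) by push_cast; ring, Complex.norm_real, Real.norm_eq_abs]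
    rw [abs_of_nonneg (by positivity)]
  rw [habs', Finset.prod_mul_distrib, Finset.prod_const, Finset.card_range] at habs
  have hicc : Finset.Icc 1 (m + 1 - 1) = Finset.map ⟨fun k => k + 1, add_left_injective 1⟩
      (Finset.range m) := by
    ext x
    simp only [Nat.add_sub_cancel, Finset.mem_Icc, Finset.mem_map,
      Function.Embedding.coeFn_mk, Finset.mem_range]
    constructor
    · rintro ⟨h1, h2⟩; exact ⟨x - 1, by omega, by omega⟩
    · rintro ⟨a, ha, rfl⟩; omega
  rw [hicc, Finset.prod_map]
  simp only [Function.Embedding.coeFn_mk]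
  have h2 : (2 : ℝ) ^ m ≠ 0 := by positivity
  have key : (∏ k ∈ Finset.range m, Real.sin (π * (↑k + 1) / (↑m + 1))) = (m + 1) / 2 ^ m := by
    field_simp
    linarith [habs]
  simpa using key

theorem prod_Gamma_fractions (n : ℕ) (hn : 2 ≤ n) :
    (∏ i ∈ Finset.Icc 1 (n - 1), Real.Gamma ((i : ℝ) / n)) =
      Real.sqrt ((2 * Real.pi) ^ (n - 1) / n) := by
  set P := ∏ i ∈ Finset.Icc 1 (n - 1), Real.Gamma ((i : ℝ) / n) with hPdef
  have hn0 : (0 : ℝ) < n := by positivity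
  have hpos : ∀ i ∈ Finset.Icc 1 (n - 1), 0 < (i : ℝ) / n := by
    intro i hi
    have h1 : 1 ≤ i := (Finset.mem_Icc.mp hi).1
    have : (0 : ℝ) < i := by exact_mod_cast Nat.pos_of_ne_zero (by omega)
    positivity
  have hP : 0 < P := Finset.prod_pos fun i hi => Real.Gamma_pos_of_pos (hpos i hi)
  have hrefl : P = ∏ i ∈ Finset.Icc 1 (n - 1), Real.Gamma (1 - (i : ℝ) / n) := by
    rw [hPdef]
    apply Finset.prod_nbij' (fun i => n - i) (fun i => n - i)
    · intro i hi; simp only [Finset.mem_Icc] at *; omega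
    · intro i hi; simp only [Finset.mem_Icc] at *; omega
    · intro i hi; simp only [Finset.mem_Icc] at *; omega
    · intro i hi; simp only [Finset.mem_Icc] at *; omega
    · intro i hi
      simp only [Finset.mem_Icc] at hi
      congr 1
      have hc : ((n - i : ℕ) : ℝ) = (n : ℝ) - i := by
        have : i ≤ n := by omega
        push_cast [this]
        ring
      rw [hc]
      field_simp
      ring
  have hsq : P ^ 2 = (2 * π) ^ (n - 1) / n := by
    have hprod : P ^ 2 = ∏ i ∈ Finset.Icc 1 (n - 1),
        (Real.Gamma ((i : ℝ) / n) * Real.Gamma (1 - (i : ℝ) / n)) := by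
      rw [Finset.prod_mul_distrib, sq, ← hPdef, ← hrefl]
    rw [hprod]
    have hstep : ∀ i ∈ Finset.Icc 1 (n - 1),
        Real.Gamma ((i : ℝ) / n) * Real.Gamma (1 - (i : ℝ) / n) =
          π / Real.sin (π * i / n) := by
      intro i hi
      rw [Real.Gamma_mul_Gamma_one_sub]
      ring_nf
    rw [Finset.prod_congr rfl hstep, Finset.prod_div_distrib, Finset.prod_const,
      Nat.card_Icc, prod_sin_pi_div n hn]
    simp only [Nat.add_sub_cancel]
    rw [mul_pow]
    have h2 : (2 : ℝ) ^ (n - 1) ≠ 0 := by positivity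
    field_simp
  rw [← hsq, Real.sqrt_sq hP.le]
end
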